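/- Fix d ≥ 1 and let σ denote the uniform probability measure on the unit sphere 𝕊^{d−1} ⊂ ℝ^d, and set λ₀ = 1/(2d). There exist constants C > 0 and δ > 0 such that for every probability space (Ω, ν) and every bounded measurable map Δ : Ω → ℝ^d with ‖Δ(ω)‖ ≤ δ for ν-almost every ω, | λ₀ (1 − ∫_Ω ‖Δ(ω)‖² dν(ω)) + ∫_Ω log ( ∫_{𝕊^{d−1}} e^{⟨Δ(ω),z⟩} dσ(z) ) dν(ω) − λ₀ | ≤ C ∫_Ω ‖Δ(ω)‖³ dν(ω). -/

import Mathlib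

open MeasureTheory RealInnerProductSpace

variable {d : ℕ}

lemma aux_integrable_bound {α : Type*} [MeasurableSpace α] {μ : Measure α}
    [IsFiniteMeasure μ] {f : α → ℝ} (hm : AEStronglyMeasurable f μ) {M : ℝ}
    (h : ∀ᵐ a ∂μ, |f a| ≤ M) : Integrable f μ :=
  (integrable_const M).mono' hm (by simpa using h)

lemma aux_first_moment (σ : Measure (EuclideanSpace ℝ (Fin d))) [IsProbabilityMeasure σ]
    (hinv : ∀ R : EuclideanSpace ℝ (Fin d) ≃ₗᵢ[ℝ] EuclideanSpace ℝ (Fin d), σ.map R = σ)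
    (x : EuclideanSpace ℝ (Fin d)) : ∫ z, ⟪x, z⟫ ∂σ = 0 := by
  have hm := hinv (LinearIsometryEquiv.neg ℝ)
  have h1 : ∫ z, ⟪x, z⟫ ∂σ = ∫ z, ⟪x, -z⟫ ∂σ := by
    conv_lhs => rw [← hm]
    rw [integral_map ((LinearIsometryEquiv.neg ℝ : EuclideanSpace ℝ (Fin d) ≃ₗᵢ[ℝ]
        EuclideanSpace ℝ (Fin d)).continuous.measurable.aemeasurable)
      ((continuous_const.inner continuous_id).aestronglyMeasurable)]
    simp
  have h2 : ∫ z, ⟪x, -z⟫ ∂σ = - ∫ z, ⟪x, z⟫ ∂σ := by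
    simp [inner_neg_right, integral_neg]
  linarith [h1, h2.symm ▸ h1]


lemma aux_sphere_ae (σ : Measure (EuclideanSpace ℝ (Fin d)))
    (hsupp : σ (Metric.sphere (0 : EuclideanSpace ℝ (Fin d)) 1)ᶜ = 0) :
    ∀ᵐ z ∂σ, ‖z‖ = 1 := by
  have h : ∀ᵐ z ∂σ, z ∈ Metric.sphere (0 : EuclideanSpace ℝ (Fin d)) 1 := by
    rw [ae_iff]
    simpa [Set.compl_def] using hsupp
  filter_upwards [h] with z hz
  simpa using hz

lemma aux_unit_inv (σ : Measure (EuclideanSpace ℝ (Fin d))) [IsProbabilityMeasure σ]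
    (hinv : ∀ R : EuclideanSpace ℝ (Fin d) ≃ₗᵢ[ℝ] EuclideanSpace ℝ (Fin d), σ.map R = σ)
    (u v : EuclideanSpace ℝ (Fin d)) (hu : ‖u‖ = 1) (hv : ‖v‖ = 1) :
    ∫ z, ⟪u, z⟫ ^ 2 ∂σ = ∫ z, ⟪v, z⟫ ^ 2 ∂σ := by
  set R := Submodule.reflection (ℝ ∙ (u - v))ᗮ with hR
  have hRu : R u = v := Submodule.reflection_sub (hu.trans hv.symm)
  have h1 : ∫ z, ⟪v, z⟫ ^ 2 ∂σ = ∫ z, ⟪v, R z⟫ ^ 2 ∂σ := by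
    conv_lhs => rw [← hinv R]
    rw [integral_map (R.continuous.measurable.aemeasurable)
      (((continuous_const.inner continuous_id).pow 2).aestronglyMeasurable)]
  rw [h1]
  congr 1
  funext z
  rw [← hRu, R.inner_map_map]

lemma aux_second_moment (hd : 1 ≤ d) (σ : Measure (EuclideanSpace ℝ (Fin d)))
    [IsProbabilityMeasure σ]
    (hsupp : σ (Metric.sphere (0 : EuclideanSpace ℝ (Fin d)) 1)ᶜ = 0)
    (hinv : ∀ R : EuclideanSpace ℝ (Fin d) ≃ₗᵢ[ℝ] EuclideanSpace ℝ (Fin d), σ.map R = σ)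
    (x : EuclideanSpace ℝ (Fin d)) :
    ∫ z, ⟪x, z⟫ ^ 2 ∂σ = ‖x‖ ^ 2 / d := by
  have hzs := aux_sphere_ae σ hsupp
  -- integrability of z ↦ ⟪w,z⟫^2 for any w
  have hint : ∀ w : EuclideanSpace ℝ (Fin d),
      Integrable (fun z => ⟪w, z⟫ ^ 2) σ := by
    intro w
    apply aux_integrable_bound
      (((continuous_const.inner continuous_id).pow 2).aestronglyMeasurable) (M := ‖w‖ ^ 2)
    filter_upwards [hzs] with z hz
    have h1 : |⟪w, z⟫| ≤ ‖w‖ := by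
      have := abs_real_inner_le_norm w z
      rwa [hz, mul_one] at this
    calc |⟪w, z⟫ ^ 2| = |⟪w, z⟫| ^ 2 := by rw [abs_pow]
      _ ≤ ‖w‖ ^ 2 := by gcongr
  -- the basis vectors
  set e : Fin d → EuclideanSpace ℝ (Fin d) := fun i => EuclideanSpace.single i (1 : ℝ) with he
  have hnorme : ∀ i, ‖e i‖ = 1 := by intro i; simp [he]
  have hsum : ∑ i : Fin d, ∫ z, ⟪e i, z⟫ ^ 2 ∂σ = 1 := by
    rw [← integral_finset_sum _ (fun i _ => hint (e i))]
    have hcong : ∀ᵐ z ∂σ, ∑ i : Fin d, ⟪e i, z⟫ ^ 2 = 1 := by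
      filter_upwards [hzs] with z hz
      have h1 : ∑ i : Fin d, ⟪e i, z⟫ ^ 2 = ∑ i : Fin d, (z i) ^ 2 := by
        apply Finset.sum_congr rfl
        intro i _
        rw [he]
        simp [EuclideanSpace.inner_single_left]
      rw [h1]
      have h2 : ‖z‖ ^ 2 = ∑ i : Fin d, (z i) ^ 2 := by
        rw [EuclideanSpace.norm_eq, Real.sq_sqrt (by positivity)]
        simp [sq_abs]
      rw [← h2, hz, one_pow]
    rw [integral_congr_ae hcong]
    simp
  -- all the integrals are equal
  have i0 : Fin d := ⟨0, hd⟩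
  have hconst : ∀ i : Fin d, ∫ z, ⟪e i, z⟫ ^ 2 ∂σ = ∫ z, ⟪e i0, z⟫ ^ 2 ∂σ :=
    fun i => aux_unit_inv σ hinv (e i) (e i0) (hnorme i) (hnorme i0)
  have hdc : (d : ℝ) * ∫ z, ⟪e i0, z⟫ ^ 2 ∂σ = 1 := by
    rw [← hsum, Finset.sum_congr rfl (fun i _ => hconst i)]
    simp [mul_comm]
  have hdpos : (0 : ℝ) < d := by exact_mod_cast hd
  have hc : ∫ z, ⟪e i0, z⟫ ^ 2 ∂σ = 1 / d := by field_simp at hdc ⊢; linarith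
  -- reduce general x to the unit case
  rcases eq_or_ne x 0 with rfl | hx
  · simp
  · have hxn : (0 : ℝ) < ‖x‖ := norm_pos_iff.mpr hx
    set u := ‖x‖⁻¹ • x with hu
    have hun : ‖u‖ = 1 := by
      rw [hu, norm_smul]
      simp [abs_of_pos hxn, inv_mul_cancel₀ hxn.ne']
    have hxu : ∀ z, ⟪x, z⟫ = ‖x‖ * ⟪u, z⟫ := by
      intro z
      rw [hu, real_inner_smul_left]
      field_simp
    have h1 : ∫ z, ⟪x, z⟫ ^ 2 ∂σ = ‖x‖ ^ 2 * ∫ z, ⟪u, z⟫ ^ 2 ∂σ := by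
      rw [← integral_const_mul]
      congr 1
      funext z
      rw [hxu z]
      ring
    rw [h1, aux_unit_inv σ hinv u (e i0) hun (hnorme i0), hc]
    ring

lemma aux_exp_taylor (t : ℝ) (ht : |t| ≤ 1) :
    |Real.exp t - (1 + t + t ^ 2 / 2)| ≤ |t| ^ 3 * (2 / 9) := by
  have h := Real.exp_bound ht (n := 3) (by norm_num)
  have hs : ∑ m ∈ Finset.range 3, t ^ m / m.factorial = 1 + t + t ^ 2 / 2 := by
    simp [Finset.sum_range_succ]
  rw [hs] at h
  convert h using 2
  norm_num [Nat.factorial]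

lemma aux_log_taylor (u : ℝ) (hu : |u| ≤ 1 / 4) :
    |Real.log (1 + u) - u| ≤ (4 / 3) * u ^ 2 := by
  have h := Real.abs_log_sub_add_sum_range_le (x := -u) (by rw [abs_neg]; linarith) 1
  simp only [Finset.sum_range_one, pow_one, abs_neg, sub_neg_eq_add] at h
  have h' : |Real.log (1 + u) - u| ≤ |u| ^ 2 / (1 - |u|) := by
    have he : (-u) ^ (0 + 1) / ((0 : ℕ) + 1) + Real.log (1 + u) = Real.log (1 + u) - u := by
      push_cast; ring
    rw [he] at h
    exact h
  refine h'.trans ?_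
  have h1 : (3 : ℝ) / 4 ≤ 1 - |u| := by linarith
  have h2 : |u| ^ 2 / (1 - |u|) ≤ |u| ^ 2 / (3 / 4) :=
    div_le_div_of_nonneg_left (by positivity) (by norm_num) h1
  refine h2.trans ?_
  rw [sq_abs]
  linarith [sq_nonneg u]

lemma aux_pointwise (hd : 1 ≤ d) (σ : Measure (EuclideanSpace ℝ (Fin d)))
    [IsProbabilityMeasure σ]
    (hsupp : σ (Metric.sphere (0 : EuclideanSpace ℝ (Fin d)) 1)ᶜ = 0)
    (hinv : ∀ R : EuclideanSpace ℝ (Fin d) ≃ₗᵢ[ℝ] EuclideanSpace ℝ (Fin d), σ.map R = σ)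
    (x : EuclideanSpace ℝ (Fin d)) (hx : ‖x‖ ≤ 1 / 2) :
    |Real.log (∫ z, Real.exp ⟪x, z⟫ ∂σ) - ‖x‖ ^ 2 / (2 * d)| ≤ 3 * ‖x‖ ^ 3 := by
  have hzs := aux_sphere_ae σ hsupp
  have hd1 : (1 : ℝ) ≤ d := by exact_mod_cast hd
  have hxn : (0 : ℝ) ≤ ‖x‖ := norm_nonneg x
  have htb : ∀ᵐ z ∂σ, |⟪x, z⟫| ≤ ‖x‖ := by
    filter_upwards [hzs] with z hz
    have := abs_real_inner_le_norm x z
    rwa [hz, mul_one] at this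
  -- integrabilities
  have hmeas_t : Continuous fun z : EuclideanSpace ℝ (Fin d) => ⟪x, z⟫ :=
    continuous_const.inner continuous_id
  have hmeas_e : Continuous fun z : EuclideanSpace ℝ (Fin d) => Real.exp ⟪x, z⟫ :=
    Real.continuous_exp.comp hmeas_t
  have hI_exp : Integrable (fun z => Real.exp ⟪x, z⟫) σ := by
    apply aux_integrable_bound hmeas_e.aestronglyMeasurable (M := Real.exp ‖x‖)
    filter_upwards [htb] with z hz
    rw [abs_of_pos (Real.exp_pos _)]
    exact Real.exp_le_exp.mpr ((le_abs_self _).trans hz)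
  have hI_t : Integrable (fun z => ⟪x, z⟫) σ :=
    aux_integrable_bound hmeas_t.aestronglyMeasurable (M := ‖x‖) htb
  have hI_t2 : Integrable (fun z => ⟪x, z⟫ ^ 2) σ := by
    apply aux_integrable_bound ((hmeas_t.pow 2).aestronglyMeasurable) (M := ‖x‖ ^ 2)
    filter_upwards [htb] with z hz
    show |⟪x, z⟫ ^ 2| ≤ ‖x‖ ^ 2
    rw [abs_pow]
    gcongr
  set F := ∫ z, Real.exp ⟪x, z⟫ ∂σ with hF
  have hI_c : Integrable (fun _ : EuclideanSpace ℝ (Fin d) => (1 : ℝ)) σ := integrable_const 1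
  have hI_ct : Integrable (fun z => 1 + ⟪x, z⟫) σ := hI_c.add hI_t
  have hI_h : Integrable (fun z => ⟪x, z⟫ ^ 2 / 2) σ := hI_t2.div_const 2
  have hI_poly : Integrable (fun z => 1 + ⟪x, z⟫ + ⟪x, z⟫ ^ 2 / 2) σ := hI_ct.add hI_h
  have hFeq : F - 1 - ‖x‖ ^ 2 / (2 * d)
      = ∫ z, (Real.exp ⟪x, z⟫ - (1 + ⟪x, z⟫ + ⟪x, z⟫ ^ 2 / 2)) ∂σ := by
    rw [integral_sub hI_exp hI_poly, integral_add hI_ct hI_h, integral_add hI_c hI_t,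
      integral_const, integral_div, aux_first_moment σ hinv x,
      aux_second_moment hd σ hsupp hinv x]
    simp only [measure_univ, probReal_univ, ENNReal.toReal_one, smul_eq_mul, mul_one, ← hF]
    rw [show ‖x‖ ^ 2 / (2 * (d : ℝ)) = ‖x‖ ^ 2 / d / 2 by rw [div_div, mul_comm]]
    ring
  have hE1 : |F - 1 - ‖x‖ ^ 2 / (2 * d)| ≤ (2 / 9) * ‖x‖ ^ 3 := by
    rw [hFeq]
    have hb : ∀ᵐ z ∂σ,
        ‖Real.exp ⟪x, z⟫ - (1 + ⟪x, z⟫ + ⟪x, z⟫ ^ 2 / 2)‖ ≤ (2 / 9) * ‖x‖ ^ 3 := by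
      filter_upwards [htb] with z hz
      have h1 : |⟪x, z⟫| ≤ 1 := hz.trans (by linarith)
      have h2 := aux_exp_taylor ⟪x, z⟫ h1
      rw [Real.norm_eq_abs]
      refine h2.trans ?_
      have : |⟪x, z⟫| ^ 3 ≤ ‖x‖ ^ 3 := by gcongr
      linarith
    have h := norm_integral_le_of_norm_le_const hb
    simpa using h
  set u := F - 1 with hu
  have hx3 : ‖x‖ ^ 3 ≤ (1 / 2) * ‖x‖ ^ 2 := by nlinarith
  have h2d : ‖x‖ ^ 2 / (2 * (d : ℝ)) ≤ ‖x‖ ^ 2 / 2 := by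
    apply div_le_div_of_nonneg_left (by positivity) (by norm_num)
    nlinarith
  have h2d0 : (0 : ℝ) ≤ ‖x‖ ^ 2 / (2 * d) := by positivity
  have hub : |u| ≤ ‖x‖ ^ 2 := by
    have h := abs_add_le (u - ‖x‖ ^ 2 / (2 * d)) (‖x‖ ^ 2 / (2 * d))
    rw [sub_add_cancel] at h
    have h' := h.trans (add_le_add hE1 (le_of_eq (abs_of_nonneg h2d0)))
    nlinarith [h', hx3, h2d]
  have hu4 : |u| ≤ 1 / 4 := hub.trans (by nlinarith)
  have hlogu := aux_log_taylor u hu4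
  have h1u : (1 : ℝ) + u = F := by rw [hu]; ring
  have hu2 : u ^ 2 ≤ ‖x‖ ^ 4 := by nlinarith [abs_nonneg u, sq_abs u]
  rw [← h1u, show Real.log (1 + u) - ‖x‖ ^ 2 / (2 * (d : ℝ))
      = (Real.log (1 + u) - u) + (u - ‖x‖ ^ 2 / (2 * (d : ℝ))) by ring]
  calc |(Real.log (1 + u) - u) + (u - ‖x‖ ^ 2 / (2 * (d : ℝ)))|
      ≤ |Real.log (1 + u) - u| + |u - ‖x‖ ^ 2 / (2 * (d : ℝ))| := abs_add_le _ _
    _ ≤ (4 / 3) * u ^ 2 + (2 / 9) * ‖x‖ ^ 3 := add_le_add hlogu hE1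
    _ ≤ 3 * ‖x‖ ^ 3 := by
        have hx4 : ‖x‖ ^ 4 ≤ (1 / 2) * ‖x‖ ^ 3 := by
          nlinarith [pow_nonneg hxn 3]
        have h5 : (4 / 3 : ℝ) * u ^ 2 ≤ 4 / 3 * (1 / 2 * ‖x‖ ^ 3) :=
          mul_le_mul_of_nonneg_left (hu2.trans hx4) (by norm_num)
        have h6 : (0 : ℝ) ≤ ‖x‖ ^ 3 := pow_nonneg hxn 3
        linarith


/-- **Integrated form of Proposition 2 / Corollary 1.**
Let `σ` be the uniform probability measure on the unit sphere `𝕊^{d-1} ⊆ ℝ^d`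
(a rotation-invariant probability measure supported on the sphere) and set
`λ₀ = 1/(2d)`.  There are constants `C > 0` and `δ > 0` such that for every
probability space `(Ω, ν)` and every bounded measurable `Δ : Ω → ℝ^d` with
`‖Δ(ω)‖ ≤ δ` for `ν`-a.e. `ω`,
`|λ₀(1 − ∫‖Δ‖² dν) + ∫ log(∫ e^{⟪Δ(ω),z⟫} dσ(z)) dν − λ₀| ≤ C ∫ ‖Δ‖³ dν`. -/
theorem metra_penalty_approximates_contrastive_term
    (d : ℕ) (hd : 1 ≤ d)
    (σ : Measure (EuclideanSpace ℝ (Fin d))) [IsProbabilityMeasure σ]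
    (hsupp : σ (Metric.sphere (0 : EuclideanSpace ℝ (Fin d)) 1)ᶜ = 0)
    (hinv : ∀ R : EuclideanSpace ℝ (Fin d) ≃ₗᵢ[ℝ] EuclideanSpace ℝ (Fin d),
      σ.map R = σ)
    (lam0 : ℝ) (hlam0 : lam0 = 1 / (2 * d)) :
    ∃ C > (0 : ℝ), ∃ δ > (0 : ℝ),
      ∀ (Ω : Type) (_ : MeasurableSpace Ω) (ν : Measure Ω),
        IsProbabilityMeasure ν →
        ∀ Δ : Ω → EuclideanSpace ℝ (Fin d), Measurable Δ →
        (∃ M : ℝ, ∀ ω, ‖Δ ω‖ ≤ M) →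
        (∀ᵐ ω ∂ν, ‖Δ ω‖ ≤ δ) →
        |lam0 * (1 - ∫ ω, ‖Δ ω‖ ^ 2 ∂ν)
            + (∫ ω, Real.log (∫ z, Real.exp ⟪Δ ω, z⟫ ∂σ) ∂ν) - lam0|
          ≤ C * ∫ ω, ‖Δ ω‖ ^ 3 ∂ν := by
  refine ⟨3, by norm_num, 1/2, by norm_num, ?_⟩
  intro Ω mΩ ν hν Δ hΔ hbdd hδ
  haveI := hν
  have hsm : StronglyMeasurable fun p : EuclideanSpace ℝ (Fin d) × EuclideanSpace ℝ (Fin d) =>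
      Real.exp ⟪p.1, p.2⟫ :=
    (Real.continuous_exp.comp continuous_inner).stronglyMeasurable
  have hFmeas : Measurable fun x : EuclideanSpace ℝ (Fin d) =>
      ∫ z, Real.exp ⟪x, z⟫ ∂σ := hsm.integral_prod_right'.measurable
  have hgmeas : Measurable fun ω =>
      Real.log (∫ z, Real.exp ⟪Δ ω, z⟫ ∂σ) - lam0 * ‖Δ ω‖ ^ 2 :=
    (Real.measurable_log.comp (hFmeas.comp hΔ)).sub
      ((hΔ.norm.pow_const 2).const_mul lam0)
  have hgb : ∀ᵐ ω ∂ν, |Real.log (∫ z, Real.exp ⟪Δ ω, z⟫ ∂σ) - lam0 * ‖Δ ω‖ ^ 2|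
      ≤ 3 * ‖Δ ω‖ ^ 3 := by
    filter_upwards [hδ] with ω hω
    rw [show lam0 * ‖Δ ω‖ ^ 2 = ‖Δ ω‖ ^ 2 / (2 * (d : ℝ)) by rw [hlam0]; ring]
    exact aux_pointwise hd σ hsupp hinv (Δ ω) hω
  have hg_int : Integrable (fun ω => Real.log (∫ z, Real.exp ⟪Δ ω, z⟫ ∂σ)
      - lam0 * ‖Δ ω‖ ^ 2) ν := by
    apply aux_integrable_bound hgmeas.aestronglyMeasurable (M := 3 * (1/2) ^ 3)
    filter_upwards [hgb, hδ] with ω h1 h2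
    refine h1.trans ?_
    gcongr
  have hI2 : Integrable (fun ω => ‖Δ ω‖ ^ 2) ν := by
    apply aux_integrable_bound ((hΔ.norm.pow_const 2).aestronglyMeasurable)
      (M := (1/2 : ℝ) ^ 2)
    filter_upwards [hδ] with ω hω
    rw [abs_of_nonneg (by positivity)]
    gcongr
  have hI3 : Integrable (fun ω => ‖Δ ω‖ ^ 3) ν := by
    apply aux_integrable_bound ((hΔ.norm.pow_const 3).aestronglyMeasurable)
      (M := (1/2 : ℝ) ^ 3)
    filter_upwards [hδ] with ω hω
    rw [abs_of_nonneg (by positivity)]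
    gcongr
  have hIlog : Integrable (fun ω => Real.log (∫ z, Real.exp ⟪Δ ω, z⟫ ∂σ)) ν := by
    have heq : (fun ω => Real.log (∫ z, Real.exp ⟪Δ ω, z⟫ ∂σ))
        = fun ω => (Real.log (∫ z, Real.exp ⟪Δ ω, z⟫ ∂σ) - lam0 * ‖Δ ω‖ ^ 2)
          + lam0 * ‖Δ ω‖ ^ 2 := by funext ω; ring
    rw [heq]
    exact hg_int.add (hI2.const_mul lam0)
  have hsplit : lam0 * (1 - ∫ ω, ‖Δ ω‖ ^ 2 ∂ν)
      + (∫ ω, Real.log (∫ z, Real.exp ⟪Δ ω, z⟫ ∂σ) ∂ν) - lam0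
      = ∫ ω, (Real.log (∫ z, Real.exp ⟪Δ ω, z⟫ ∂σ) - lam0 * ‖Δ ω‖ ^ 2) ∂ν := by
    rw [integral_sub hIlog (hI2.const_mul lam0), integral_const_mul]
    ring
  rw [hsplit]
  calc |∫ ω, (Real.log (∫ z, Real.exp ⟪Δ ω, z⟫ ∂σ) - lam0 * ‖Δ ω‖ ^ 2) ∂ν|
      ≤ ∫ ω, |Real.log (∫ z, Real.exp ⟪Δ ω, z⟫ ∂σ) - lam0 * ‖Δ ω‖ ^ 2| ∂ν :=
        by simpa [Real.norm_eq_abs] using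
          norm_integral_le_integral_norm
            (fun ω => Real.log (∫ z, Real.exp ⟪Δ ω, z⟫ ∂σ) - lam0 * ‖Δ ω‖ ^ 2) (μ := ν)
    _ ≤ ∫ ω, 3 * ‖Δ ω‖ ^ 3 ∂ν := integral_mono_ae hg_int.abs (hI3.const_mul 3) hgb
    _ = 3 * ∫ ω, ‖Δ ω‖ ^ 3 ∂ν := integral_const_mul 3 _
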